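/- Let m be a natural number and let θ be a real number with 0 < θ ≤ m + 1. Then the truncated Chebyshev expansion satisfies sup_{−θ ≤ y ≤ θ} | P^C_{m,θ}(y) − e^{−i y} | ≤ 4 ( e^{1 − θ²/(2m+2)²} · θ/(2m+2) )^{m+1}. -/

import Mathlib

set_option maxHeartbeats 1000000

open Complex MeasureTheory intervalIntegral

/-- The Bessel function of the first kind of integer order `k`:
`J_k(θ) = (1/π) ∫_0^π cos(kτ - θ sin τ) dτ`. -/
noncomputable def besselJ (k : ℕ) (θ : ℝ) : ℝ :=
  (1 / Real.pi) * ∫ τ in (0 : ℝ)..Real.pi, Real.cos (k * τ - θ * Real.sin τ)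

noncomputable def bInt (θ : ℝ) (n : ℤ) : ℂ :=
  ∫ τ in (-Real.pi)..Real.pi, Complex.exp (I * (θ * Complex.sin τ - n * τ))

lemma bFun_periodic (θ : ℝ) (n : ℤ) (w : ℂ) :
    Complex.exp (I * (θ * Complex.sin (w + 2 * Real.pi) - n * (w + 2 * Real.pi)))
      = Complex.exp (I * (θ * Complex.sin w - n * w)) := by
  rw [Complex.sin_add_two_pi]
  have : I * (θ * Complex.sin w - n * (w + 2 * Real.pi))
      = I * (θ * Complex.sin w - n * w) + (-n : ℤ) * (2 * Real.pi * I) := by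
    push_cast; ring
  rw [this, Complex.exp_add, Complex.exp_int_mul_two_pi_mul_I, mul_one]

lemma bInt_shift (θ : ℝ) (n : ℤ) (a : ℝ) :
    bInt θ n = ∫ τ in (-Real.pi)..Real.pi,
      Complex.exp (I * (θ * Complex.sin (τ + a * I) - n * (τ + a * I))) := by
  set F : ℂ → ℂ := fun w => Complex.exp (I * (θ * Complex.sin w - n * w)) with hF
  have hd : Differentiable ℂ F := by
    apply Complex.differentiable_exp.comp
    apply Differentiable.mul (differentiable_const _)
    exact ((differentiable_const _).mul Complex.differentiable_sin).sub
      ((differentiable_const _).mul differentiable_id)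
  have key := Complex.integral_boundary_rect_eq_zero_of_differentiableOn F
      ((-Real.pi : ℝ) : ℂ) ((Real.pi : ℝ) + a * I)
      (hd.differentiableOn)
  simp only [Complex.ofReal_re, Complex.ofReal_im, Complex.add_re, Complex.add_im,
    Complex.mul_re, Complex.mul_im, Complex.I_re, Complex.I_im, mul_zero, mul_one,
    zero_mul, sub_zero, add_zero, zero_add, zero_sub, neg_zero] at key
  -- key : (∫ x in -π..π, F (x + 0*I)) - (∫ x in -π..π, F (x + a*I))
  --        + I•(∫ y in 0..a, F (π + y*I)) - I•(∫ y in 0..a, F (-π + y*I)) = 0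
  have hside : (∫ y in (0:ℝ)..a, F ((Real.pi : ℂ) + y * I))
      = ∫ y in (0:ℝ)..a, F ((-Real.pi : ℝ) + y * I) := by
    apply intervalIntegral.integral_congr
    intro y _
    show F ((Real.pi : ℂ) + y * I) = F ((-Real.pi : ℝ) + y * I)
    have : ((Real.pi : ℂ)) + y * I = ((-Real.pi : ℝ) : ℂ) + y * I + 2 * Real.pi := by
      push_cast; ring
    rw [this, hF]
    exact bFun_periodic θ n _
  rw [hside] at key
  have hzero : ∀ x : ℝ, F ((x : ℂ) + (0:ℝ) * I) = Complex.exp (I * (θ * Complex.sin x - n * x)) := by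
    intro x; simp [hF]
  have h1 : (∫ x in (-Real.pi)..Real.pi, F ((x:ℂ) + (0:ℝ) * I)) = bInt θ n := by
    rw [bInt]; apply intervalIntegral.integral_congr; intro x _; exact hzero x
  have h2 : (∫ x in (-Real.pi)..Real.pi, F ((x:ℂ) + (a:ℝ) * I))
      = ∫ τ in (-Real.pi)..Real.pi,
          Complex.exp (I * (θ * Complex.sin (τ + a * I) - n * (τ + a * I))) := rfl
  rw [← h1, ← h2]
  linear_combination key

lemma bInt_norm_le (θ : ℝ) (hθ : 0 ≤ θ) (n : ℤ) (a : ℝ) :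
    ‖bInt θ n‖ ≤ 2 * Real.pi * Real.exp ((n : ℝ) * a + θ * |Real.sinh a|) := by
  rw [bInt_shift θ n a]
  have key : ∀ x ∈ Set.uIoc (-Real.pi) Real.pi,
      ‖Complex.exp (I * (θ * Complex.sin ((x:ℂ) + a * I) - n * ((x:ℂ) + a * I)))‖
        ≤ Real.exp ((n : ℝ) * a + θ * |Real.sinh a|) := by
    intro x _
    rw [Complex.norm_exp, Real.exp_le_exp]
    have hsin : Complex.sin ((x:ℂ) + (a:ℂ) * I)
        = ((Real.sin x * Real.cosh a : ℝ) : ℂ) + ((Real.cos x * Real.sinh a : ℝ) : ℂ) * I := by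
      rw [Complex.sin_add_mul_I]; push_cast; ring
    have hre : (I * (θ * Complex.sin ((x:ℂ) + a * I) - n * ((x:ℂ) + a * I))).re
        = (n : ℝ) * a - θ * (Real.cos x * Real.sinh a) := by
      rw [hsin]
      simp [Complex.mul_re, Complex.mul_im, Complex.cos_ofReal_re, Complex.sinh_ofReal_re]
    rw [hre]
    have h2 : -(Real.cos x * Real.sinh a) ≤ |Real.sinh a| := by
      calc -(Real.cos x * Real.sinh a) ≤ |Real.cos x * Real.sinh a| := neg_le_abs _
        _ = |Real.cos x| * |Real.sinh a| := abs_mul _ _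
        _ ≤ 1 * |Real.sinh a| :=
            mul_le_mul_of_nonneg_right (Real.abs_cos_le_one x) (abs_nonneg _)
        _ = |Real.sinh a| := one_mul _
    nlinarith [abs_nonneg (Real.sinh a)]
  calc ‖_‖ ≤ Real.exp ((n : ℝ) * a + θ * |Real.sinh a|) * |Real.pi - (-Real.pi)| :=
        intervalIntegral.norm_integral_le_of_norm_le_const key
    _ = 2 * Real.pi * Real.exp ((n : ℝ) * a + θ * |Real.sinh a|) := by
        have h3 : |Real.pi - -Real.pi| = 2 * Real.pi := by
          rw [show Real.pi - -Real.pi = 2 * Real.pi by ring]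
          exact _root_.abs_of_nonneg (by nlinarith [Real.pi_pos])
        rw [h3]; ring

lemma bInt_norm_le' (θ q : ℝ) (hθ : 0 ≤ θ) (hq : 0 < q) (hq1 : q ≤ 1) (n : ℤ) :
    ‖bInt θ n‖ ≤ 2 * Real.pi * (Real.exp (θ / 2 * (1 / q - q)) * q ^ n.natAbs) := by
  set a : ℝ := if 0 ≤ n then Real.log q else -Real.log q with ha
  have hcast : ((n.natAbs : ℝ)) = |(n : ℝ)| := by
    rw [Nat.cast_natAbs]; exact Int.cast_abs
  have hna : (n : ℝ) * a = (n.natAbs : ℝ) * Real.log q := by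
    rcases le_or_gt 0 n with h | h
    · rw [ha, if_pos h, hcast, _root_.abs_of_nonneg (by exact_mod_cast (h : (0:ℤ) ≤ n) : (0:ℝ) ≤ (n:ℝ))]
    · rw [ha, if_neg (not_le.mpr h), hcast, _root_.abs_of_neg (by exact_mod_cast (h : n < (0:ℤ)) : (n:ℝ) < 0)]; ring
  have hqinv : q ≤ q⁻¹ := by
    have h1 : q * q ≤ 1 := by nlinarith
    have := mul_inv_cancel₀ hq.ne'
    nlinarith [inv_pos.mpr hq]
  have hsinh : |Real.sinh a| = (1 / q - q) / 2 := by
    have h1 : |Real.sinh a| = |Real.sinh (Real.log q)| := by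
      rcases le_or_gt 0 n with h | h
      · rw [ha, if_pos h]
      · rw [ha, if_neg (not_le.mpr h), Real.sinh_neg, abs_neg]
    rw [h1, Real.sinh_log hq, _root_.abs_of_nonpos (by linarith), one_div]
    ring
  calc ‖bInt θ n‖ ≤ 2 * Real.pi * Real.exp ((n : ℝ) * a + θ * |Real.sinh a|) :=
        bInt_norm_le θ hθ n a
    _ = 2 * Real.pi * (Real.exp (θ / 2 * (1 / q - q)) * q ^ n.natAbs) := by
        rw [hna, hsinh]
        rw [show (n.natAbs : ℝ) * Real.log q + θ * ((1 / q - q) / 2)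
            = θ / 2 * (1 / q - q) + (n.natAbs : ℝ) * Real.log q by ring]
        rw [Real.exp_add, Real.exp_nat_mul, Real.exp_log hq]

private lemma even_integral (g : ℝ → ℝ) (hc : Continuous g) (hg : ∀ x, g (-x) = g x) :
    (∫ x in (-Real.pi)..Real.pi, g x) = 2 * ∫ τ in (0:ℝ)..Real.pi, g τ := by
  rw [← intervalIntegral.integral_add_adjacent_intervals (a := -Real.pi) (b := 0) (c := Real.pi)
    (hc.intervalIntegrable _ _) (hc.intervalIntegrable _ _)]
  have h0 := intervalIntegral.integral_comp_neg (a := 0) (b := Real.pi) g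
  rw [neg_zero] at h0
  have h1 : (∫ x in (-Real.pi)..(0:ℝ), g x) = ∫ x in (0:ℝ)..Real.pi, g x := by
    rw [← h0]
    apply intervalIntegral.integral_congr
    intro x _
    exact hg x
  rw [h1]; ring

private lemma odd_integral (g : ℝ → ℝ) (hg : ∀ x, g (-x) = -g x) :
    (∫ x in (-Real.pi)..Real.pi, g x) = 0 := by
  have h1 : (∫ x in (-Real.pi)..Real.pi, g (-x)) = ∫ x in (-Real.pi)..Real.pi, g x := by
    rw [intervalIntegral.integral_comp_neg g]; simp
  simp_rw [hg] at h1
  rw [intervalIntegral.integral_neg] at h1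
  linarith

lemma bInt_real (θ : ℝ) (n : ℤ) :
    bInt θ n = ((2 * ∫ τ in (0:ℝ)..Real.pi, Real.cos (θ * Real.sin τ - n * τ) : ℝ) : ℂ) := by
  have hint : ∀ x : ℝ, Complex.exp (I * (θ * Complex.sin x - n * x))
      = ((Real.cos (θ * Real.sin x - n * x) : ℝ) : ℂ)
        + ((Real.sin (θ * Real.sin x - n * x) : ℝ) : ℂ) * I := by
    intro x
    have : I * ((θ : ℂ) * Complex.sin x - n * x) = ((θ * Real.sin x - n * x : ℝ) : ℂ) * I := by
      push_cast; ring
    rw [this, Complex.exp_mul_I]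
    push_cast; ring
  rw [bInt]
  simp_rw [hint]
  have hc : Continuous fun x : ℝ => Real.cos (θ * Real.sin x - n * x) := by fun_prop
  have hs : Continuous fun x : ℝ => Real.sin (θ * Real.sin x - n * x) := by fun_prop
  have i1 : IntervalIntegrable (fun x : ℝ => ((Real.cos (θ * Real.sin x - n * x) : ℝ) : ℂ))
      volume (-Real.pi) Real.pi := (by fun_prop : Continuous _).intervalIntegrable _ _
  have i2 : IntervalIntegrable (fun x : ℝ => ((Real.sin (θ * Real.sin x - n * x) : ℝ) : ℂ) * I)
      volume (-Real.pi) Real.pi := (by fun_prop : Continuous _).intervalIntegrable _ _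
  rw [intervalIntegral.integral_add i1 i2,
    intervalIntegral.integral_mul_const, intervalIntegral.integral_ofReal,
    intervalIntegral.integral_ofReal]
  have hodd : (∫ x in (-Real.pi)..Real.pi, Real.sin (θ * Real.sin x - n * x)) = 0 := by
    apply odd_integral
    intro x
    rw [Real.sin_neg, show θ * -Real.sin x - n * (-x) = -(θ * Real.sin x - n * x) by ring,
      Real.sin_neg]
  have heven : (∫ x in (-Real.pi)..Real.pi, Real.cos (θ * Real.sin x - n * x))
      = 2 * ∫ τ in (0:ℝ)..Real.pi, Real.cos (θ * Real.sin τ - n * τ) := by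
    apply even_integral _ hc
    intro x
    rw [Real.sin_neg, show θ * -Real.sin x - n * (-x) = -(θ * Real.sin x - n * x) by ring,
      Real.cos_neg]
  rw [hodd, heven]
  push_cast; ring

lemma bInt_nat (θ : ℝ) (k : ℕ) : bInt θ (k : ℤ) = ((2 * Real.pi * besselJ k θ : ℝ) : ℂ) := by
  rw [bInt_real, besselJ]
  have : ∀ τ : ℝ, Real.cos (θ * Real.sin τ - (k : ℤ) * τ) = Real.cos ((k : ℝ) * τ - θ * Real.sin τ) := by
    intro τ
    rw [show θ * Real.sin τ - ((k : ℤ) : ℝ) * τ = -((k:ℝ) * τ - θ * Real.sin τ) by push_cast; ring,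
      Real.cos_neg]
  simp_rw [this]
  have hπ : Real.pi ≠ 0 := Real.pi_ne_zero
  have hr : 2 * (∫ τ in (0:ℝ)..Real.pi, Real.cos ((k:ℝ) * τ - θ * Real.sin τ))
      = 2 * Real.pi * ((1 / Real.pi) * ∫ τ in (0:ℝ)..Real.pi, Real.cos ((k:ℝ) * τ - θ * Real.sin τ)) := by
    field_simp
  exact_mod_cast congrArg (Complex.ofReal) hr

lemma bInt_neg (θ : ℝ) (k : ℕ) : bInt θ (-(k : ℤ)) = (-1 : ℂ) ^ k * bInt θ (k : ℤ) := by
  rw [bInt_real, bInt_real]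
  have key : (∫ τ in (0:ℝ)..Real.pi, Real.cos (θ * Real.sin τ - (-(k:ℝ)) * τ))
      = (-1 : ℝ) ^ k * ∫ τ in (0:ℝ)..Real.pi, Real.cos (θ * Real.sin τ - (k:ℝ) * τ) := by
    have h1 := intervalIntegral.integral_comp_sub_left (a := 0) (b := Real.pi)
      (fun τ => Real.cos (θ * Real.sin τ - (-(k:ℝ)) * τ)) Real.pi
    rw [sub_zero, sub_self] at h1
    rw [← h1]
    rw [← intervalIntegral.integral_const_mul]
    apply intervalIntegral.integral_congr
    intro τ _
    show Real.cos (θ * Real.sin (Real.pi - τ) - (-(k:ℝ)) * (Real.pi - τ))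
        = (-1:ℝ)^k * Real.cos (θ * Real.sin τ - (k:ℝ) * τ)
    rw [Real.sin_pi_sub]
    rw [show θ * Real.sin τ - (-(k:ℝ)) * (Real.pi - τ) = (θ * Real.sin τ - (k:ℝ) * τ) + (k:ℤ) * Real.pi by push_cast; ring]
    rw [Real.cos_add_int_mul_pi, zpow_natCast]
  push_cast
  rw [key]
  push_cast; ring

noncomputable def G (θ : ℝ) : ℝ → ℂ := fun φ => Complex.exp (-I * ((θ * Real.cos φ : ℝ) : ℂ))

lemma G_periodic (θ : ℝ) : Function.Periodic (G θ) (2 * Real.pi) := by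
  intro x; simp [G, Real.cos_add_two_pi]

lemma G_continuous (θ : ℝ) : Continuous (G θ) := by
  unfold G; fun_prop

instance : Fact (0 < 2 * Real.pi) := ⟨Real.two_pi_pos⟩

noncomputable def fc (θ : ℝ) : C(AddCircle (2 * Real.pi), ℂ) :=
  ⟨AddCircle.liftIco (2 * Real.pi) (-(Real.pi/2)) (G θ),
    AddCircle.liftIco_continuous (((G_periodic θ) (-(Real.pi/2))).symm)
      (G_continuous θ).continuousOn⟩

lemma fc_apply (θ : ℝ) (φ : ℝ) (h : φ ∈ Set.Ico (-(Real.pi/2)) (-(Real.pi/2) + 2 * Real.pi)) :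
    fc θ (φ : AddCircle (2 * Real.pi)) = G θ φ :=
  AddCircle.liftIco_coe_apply (f := G θ) h

lemma fourier_eval (n : ℤ) (x : ℝ) :
    (@fourier (2 * Real.pi) n (x : AddCircle (2 * Real.pi)) : ℂ)
      = Complex.exp ((n * x : ℝ) * I) := by
  rw [fourier_coe_apply]
  congr 1
  have h2π : ((2 * Real.pi : ℝ) : ℂ) ≠ 0 := by
    exact_mod_cast Real.two_pi_pos.ne'
  rw [div_eq_iff h2π]
  push_cast
  ring

lemma fourierCoeff_fc (θ : ℝ) (n : ℤ) :
    haveI : Fact (0 < 2 * Real.pi) := ⟨Real.two_pi_pos⟩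
    fourierCoeff (⇑(fc θ)) n = (-I) ^ n * (((1 / (2 * Real.pi) : ℝ)) • bInt θ n) := by
  haveI : Fact (0 < 2 * Real.pi) := ⟨Real.two_pi_pos⟩
  rw [fourierCoeff_eq_intervalIntegral (⇑(fc θ)) n (-(Real.pi/2))]
  have hcong : (∫ x in (-(Real.pi/2))..(-(Real.pi/2) + 2 * Real.pi),
        (@fourier (2 * Real.pi) (-n) (x : AddCircle (2 * Real.pi)) : ℂ) • fc θ (x : AddCircle (2 * Real.pi)))
      = ∫ x in (-(Real.pi/2))..(-(Real.pi/2) + 2 * Real.pi),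
        Complex.exp (((-n) * x : ℝ) * I) * G θ x := by
    apply intervalIntegral.integral_congr_ae
    have hae : ∀ᵐ x : ℝ, x ≠ -(Real.pi/2) + 2 * Real.pi := by
      rw [MeasureTheory.ae_iff]
      have : {x : ℝ | ¬x ≠ -(Real.pi/2) + 2 * Real.pi} = {-(Real.pi/2) + 2 * Real.pi} := by
        ext x; simp
      rw [this]; exact measure_singleton _
    filter_upwards [hae] with x hx hmem
    have hx' : x ∈ Set.Ico (-(Real.pi/2)) (-(Real.pi/2) + 2 * Real.pi) := by
      rw [Set.uIoc_of_le (by nlinarith [Real.pi_pos])] at hmem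
      exact ⟨hmem.1.le, lt_of_le_of_ne hmem.2 hx⟩
    rw [fc_apply θ x hx', fourier_eval, smul_eq_mul]
    norm_cast
  rw [hcong]
  have hb1 : (-(Real.pi/2) : ℝ) = -Real.pi + Real.pi/2 := by ring
  have hb2 : (-(Real.pi/2) + 2 * Real.pi : ℝ) = Real.pi + Real.pi/2 := by ring
  rw [hb2, hb1, ← intervalIntegral.integral_comp_add_right
      (fun x => Complex.exp (((-n) * x : ℝ) * I) * G θ x) (Real.pi/2)]
  have hpt : ∀ τ : ℝ, Complex.exp (((-n) * (τ + Real.pi/2) : ℝ) * I) * G θ (τ + Real.pi/2)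
      = Complex.exp (-(n * (Real.pi/2) : ℝ) * I) * Complex.exp (I * (θ * Complex.sin τ - n * τ)) := by
    intro τ
    rw [G]
    simp only [Real.cos_add_pi_div_two]
    rw [← Complex.exp_add, ← Complex.exp_add]
    congr 1
    push_cast
    ring
  simp_rw [hpt]
  rw [intervalIntegral.integral_const_mul]
  have hexp : Complex.exp (-(n * (Real.pi/2) : ℝ) * I) = (-I) ^ n := by
    have h1 : (-(n * (Real.pi/2) : ℝ) : ℂ) * I = n * (((-(Real.pi/2) : ℝ) : ℂ) * I) := by
      push_cast; ring
    rw [h1, Complex.exp_int_mul]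
    congr 1
    rw [Complex.exp_mul_I, ← Complex.ofReal_cos, ← Complex.ofReal_sin]
    simp [Real.cos_pi_div_two, Real.sin_pi_div_two]
  rw [hexp, bInt]
  exact (mul_smul_comm _ _ _).symm

-- helper: coefficient values
lemma coeff_nat (θ : ℝ) (k : ℕ) :
    fourierCoeff (⇑(fc θ)) (k : ℤ) = (-I) ^ k * ((besselJ k θ : ℝ) : ℂ) := by
  rw [fourierCoeff_fc, bInt_nat, zpow_natCast]
  congr 1
  rw [Complex.real_smul, ← Complex.ofReal_mul]
  have hπ : Real.pi ≠ 0 := Real.pi_ne_zero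
  congr 1
  field_simp

lemma coeff_neg (θ : ℝ) (k : ℕ) :
    fourierCoeff (⇑(fc θ)) (-(k : ℤ)) = (-I) ^ k * ((besselJ k θ : ℝ) : ℂ) := by
  rw [fourierCoeff_fc, bInt_neg, bInt_nat]
  have h1 : ((-I : ℂ)) ^ (-(k:ℤ)) = I ^ k := by
    rw [zpow_neg, zpow_natCast, ← inv_pow, inv_neg, Complex.inv_I, neg_neg]
  rw [h1, Complex.real_smul]
  have hπ : (Real.pi : ℂ) ≠ 0 := by exact_mod_cast Real.pi_ne_zero
  push_cast
  rw [neg_pow I k]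
  field_simp

/-- For `m ∈ ℕ` and `0 < θ ≤ m + 1`, the truncated Chebyshev expansion
`P^C_{m,θ}(y) = J_0(θ) + 2 Σ_{k=1}^m (-i)^k J_k(θ) T_k(y/θ)` satisfies
`sup_{-θ ≤ y ≤ θ} |P^C_{m,θ}(y) - e^{-iy}| ≤ 4 (e^{1 - θ²/(2m+2)²} θ/(2m+2))^{m+1}`. -/
theorem chebyshev_truncation_error_bound (m : ℕ) (θ : ℝ) (hθ : 0 < θ)
    (hθm : θ ≤ (m : ℝ) + 1) :
    (⨆ y : Set.Icc (-θ) θ,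
        norm
          ((((besselJ 0 θ : ℝ) : ℂ) +
              2 * ∑ k ∈ Finset.Icc 1 m,
                (-Complex.I) ^ k * ((besselJ k θ : ℝ) : ℂ) *
                  (((Polynomial.Chebyshev.T ℝ k).eval ((y : ℝ) / θ) : ℝ) : ℂ)) -
            Complex.exp ((-Complex.I) * ((y : ℝ) : ℂ)))) ≤
      4 * (Real.exp (1 - θ ^ 2 / (2 * (m : ℝ) + 2) ^ 2) * θ / (2 * (m : ℝ) + 2)) ^ (m + 1) := by
  haveI : Nonempty (Set.Icc (-θ) θ) := Set.nonempty_Icc_subtype (by linarith)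
  set q : ℝ := θ / (2 * (m : ℝ) + 2) with hq_def
  have hm2 : (0:ℝ) < 2 * (m : ℝ) + 2 := by positivity
  have hq0 : 0 < q := div_pos hθ hm2
  have hqhalf : q ≤ 1/2 := by
    rw [hq_def, div_le_div_iff₀ hm2 (by norm_num)]
    linarith
  have hq1 : q < 1 := by linarith
  set E : ℝ := Real.exp (θ / 2 * (1 / q - q)) with hE_def
  have hE0 : 0 < E := Real.exp_pos _
  -- bound on coefficients
  have hcoeff : ∀ n : ℤ, ‖fourierCoeff (⇑(fc θ)) n‖ ≤ E * q ^ n.natAbs := by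
    intro n
    rw [fourierCoeff_fc]
    rw [norm_mul, norm_zpow, norm_neg, Complex.norm_I, one_zpow, one_mul,
      norm_smul, Real.norm_eq_abs, _root_.abs_of_nonneg (by positivity : (0:ℝ) ≤ 1/(2*Real.pi))]
    have := bInt_norm_le' θ q hθ.le hq0 (by linarith) n
    have hπ : 0 < Real.pi := Real.pi_pos
    calc 1 / (2 * Real.pi) * ‖bInt θ n‖
        ≤ 1 / (2 * Real.pi) * (2 * Real.pi * (E * q ^ n.natAbs)) := by
          apply mul_le_mul_of_nonneg_left _ (by positivity)
          rw [hE_def]; exact this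
      _ = E * q ^ n.natAbs := by field_simp
  -- summability
  have hsummable : Summable (fourierCoeff (⇑(fc θ))) := by
    apply Summable.of_norm_bounded _ hcoeff
    apply Summable.of_nat_of_neg_add_one
    · simpa using (summable_geometric_of_lt_one hq0.le hq1).mul_left E
    · exact ((summable_geometric_of_lt_one hq0.le hq1).mul_left (E*q)).congr (fun n => by
        have h : ((-((n:ℤ) + 1))).natAbs = n + 1 := by omega
        rw [h, pow_succ]; ring)
  -- per-point bound
  apply ciSup_le
  rintro ⟨y, hy⟩
  rw [Set.mem_Icc] at hy
  obtain ⟨hy1, hy2⟩ := hy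
  have hx1 : -1 ≤ y / θ := by rw [le_div_iff₀ hθ]; linarith
  have hx2 : y / θ ≤ 1 := by rw [div_le_one hθ]; linarith
  set φ : ℝ := Real.arccos (y / θ) with hφ_def
  have hcos : Real.cos φ = y / θ := Real.cos_arccos hx1 hx2
  have hφ0 : 0 ≤ φ := Real.arccos_nonneg _
  have hφπ : φ ≤ Real.pi := Real.arccos_le_pi _
  have hπ : 0 < Real.pi := Real.pi_pos
  have hφmem : φ ∈ Set.Ico (-(Real.pi/2)) (-(Real.pi/2) + 2 * Real.pi) := by
    constructor <;> [linarith; linarith]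
  have hG : G θ φ = Complex.exp (-I * (y : ℂ)) := by
    rw [G, hcos]
    congr 2
    rw [mul_div_cancel₀ _ hθ.ne']
  set F : ℤ → ℂ := fun n => fourierCoeff (⇑(fc θ)) n * Complex.exp (((n : ℝ) * φ : ℝ) * I)
    with hF_def
  have hsum : HasSum F (G θ φ) := by
    have h0 := has_pointwise_sum_fourier_series_of_summable (f := fc θ) hsummable (φ : AddCircle (2*Real.pi))
    rw [fc_apply θ φ hφmem] at h0
    apply h0.congr_fun
    intro n
    rw [hF_def, fourier_eval, smul_eq_mul]
  have hFbound : ∀ n : ℤ, ‖F n‖ ≤ E * q ^ n.natAbs := by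
    intro n
    rw [hF_def]
    simp only []
    rw [norm_mul, Complex.norm_exp_ofReal_mul_I, mul_one]
    exact hcoeff n
  have Spos : Summable (fun k : ℕ => F k) := by
    apply Summable.of_norm_bounded (g := fun k : ℕ => E * q ^ k)
      ((summable_geometric_of_lt_one hq0.le hq1).mul_left E)
    intro k
    simpa using hFbound k
  have Sneg : Summable (fun k : ℕ => F (-((k:ℤ) + 1))) := by
    apply Summable.of_norm_bounded (g := fun k : ℕ => (E * q) * q ^ k)
      ((summable_geometric_of_lt_one hq0.le hq1).mul_left (E * q))
    intro k
    have h := hFbound (-((k:ℤ) + 1))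
    have hna : ((-((k:ℤ) + 1))).natAbs = k + 1 := by omega
    rw [hna, pow_succ] at h
    calc ‖F (-((k:ℤ)+1))‖ ≤ E * (q ^ k * q) := h
      _ = E * q * q ^ k := by ring
  have hGeq : G θ φ = (∑' k : ℕ, F k) + ∑' k : ℕ, F (-((k:ℤ) + 1)) :=
    hsum.unique (HasSum.of_nat_of_neg_add_one Spos.hasSum Sneg.hasSum)
  have ht1 := Summable.sum_add_tsum_nat_add (f := fun k : ℕ => F k) (m+1) Spos
  have ht2 := Summable.sum_add_tsum_nat_add (f := fun k : ℕ => F (-((k:ℤ) + 1))) m Sneg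
  set P : ℂ := (∑ i ∈ Finset.range (m+1), F i) + ∑ i ∈ Finset.range m, F (-((i:ℤ)+1)) with hP_def
  have herr : G θ φ - P = (∑' i : ℕ, F ((i + (m+1) : ℕ)))
      + ∑' i : ℕ, F (-(((i + m : ℕ):ℤ) + 1)) := by
    rw [hGeq, hP_def]
    linear_combination - ht1 - ht2
  have hgeo : HasSum (fun i : ℕ => (E * q ^ (m+1)) * q ^ i)
      ((E * q ^ (m+1)) * (1 - q)⁻¹) :=
    (hasSum_geometric_of_lt_one hq0.le hq1).mul_left _
  have htail1 : ‖∑' i : ℕ, F ((i + (m+1) : ℕ))‖ ≤ (E * q ^ (m+1)) * (1 - q)⁻¹ := by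
    apply tsum_of_norm_bounded hgeo
    intro i
    have h := hFbound ((i + (m+1) : ℕ) : ℤ)
    have hna : (((i + (m+1) : ℕ)) : ℤ).natAbs = i + (m+1) := by omega
    rw [hna, pow_add] at h
    calc ‖F ((i + (m+1) : ℕ))‖ ≤ E * (q ^ i * q ^ (m+1)) := h
      _ = E * q ^ (m+1) * q ^ i := by ring
  have htail2 : ‖∑' i : ℕ, F (-(((i + m : ℕ):ℤ) + 1))‖ ≤ (E * q ^ (m+1)) * (1 - q)⁻¹ := by
    apply tsum_of_norm_bounded hgeo
    intro i
    have h := hFbound (-(((i + m : ℕ):ℤ) + 1))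
    have hna : ((-(((i + m : ℕ):ℤ) + 1))).natAbs = i + (m+1) := by omega
    rw [hna, pow_add] at h
    calc ‖F (-(((i + m : ℕ):ℤ) + 1))‖ ≤ E * (q ^ i * q ^ (m+1)) := h
      _ = E * q ^ (m+1) * q ^ i := by ring
  have herrbound : ‖G θ φ - P‖ ≤ 2 * ((E * q ^ (m+1)) * (1 - q)⁻¹) := by
    rw [herr]
    calc ‖_ + _‖ ≤ ‖∑' i : ℕ, F ((i + (m+1) : ℕ))‖ + ‖∑' i : ℕ, F (-(((i + m : ℕ):ℤ) + 1))‖ :=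
          norm_add_le _ _
      _ ≤ 2 * ((E * q ^ (m+1)) * (1 - q)⁻¹) := by linarith
  -- identify P with the Chebyshev partial sum
  have hA : (((besselJ 0 θ : ℝ) : ℂ) +
      2 * ∑ k ∈ Finset.Icc 1 m,
        (-Complex.I) ^ k * ((besselJ k θ : ℝ) : ℂ) *
          (((Polynomial.Chebyshev.T ℝ k).eval ((y : ℝ) / θ) : ℝ) : ℂ)) = P := by
    have hT : ∀ k : ℕ, (Polynomial.Chebyshev.T ℝ (k : ℤ)).eval (y / θ)
        = Real.cos ((k : ℝ) * φ) := by
      intro k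
      rw [← hcos, Polynomial.Chebyshev.T_real_cos]
      norm_num
    have hF0 : F 0 = ((besselJ 0 θ : ℝ) : ℂ) := by
      rw [hF_def]
      simp only [Int.cast_zero, zero_mul, Complex.ofReal_zero, Complex.exp_zero, mul_one]
      rw [show (0 : ℤ) = ((0:ℕ) : ℤ) by norm_num, coeff_nat]
      simp
    have hpairexp : ∀ t : ℝ, Complex.exp ((t:ℂ) * I) + Complex.exp (((-t : ℝ):ℂ) * I)
        = 2 * ((Real.cos t : ℝ) : ℂ) := by
      intro t
      rw [Complex.exp_mul_I, Complex.exp_mul_I, ← Complex.ofReal_cos, ← Complex.ofReal_sin,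
        ← Complex.ofReal_cos, ← Complex.ofReal_sin, Real.cos_neg, Real.sin_neg]
      push_cast
      ring
    have hpair : ∀ k : ℕ, F (k : ℤ) + F (-((k:ℤ))) =
        2 * ((-I) ^ k * ((besselJ k θ : ℝ) : ℂ) * ((Real.cos ((k:ℝ) * φ) : ℝ) : ℂ)) := by
      intro k
      rw [hF_def]
      simp only []
      rw [coeff_nat, coeff_neg]
      have h1 : ((-(k:ℤ) : ℤ) : ℝ) * φ = -((k:ℝ) * φ) := by push_cast; ring
      have h2 : (((k:ℤ) : ℝ)) * φ = (k:ℝ) * φ := by push_cast; ring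
      rw [h1, h2]
      have h3 := hpairexp ((k:ℝ) * φ)
      linear_combination ((-I)^k * ((besselJ k θ : ℝ) : ℂ)) * h3
    -- sum over Icc 1 m → range m
    have hIcc : ∀ g : ℕ → ℂ, ∑ k ∈ Finset.Icc 1 m, g k = ∑ i ∈ Finset.range m, g (i+1) := by
      intro g
      rw [← Finset.Ico_add_one_right_eq_Icc, Finset.sum_Ico_eq_sum_range]
      simp [add_comm]
    rw [hIcc]
    have hs1 : ∑ i ∈ Finset.range (m+1), F i = (∑ i ∈ Finset.range m, F ((i+1 : ℕ))) + F 0 := by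
      exact Finset.sum_range_succ' _ m
    rw [hP_def, hs1, hF0]
    rw [Finset.mul_sum]
    have : ∀ i ∈ Finset.range m,
        2 * ((-I) ^ (i+1) * ((besselJ (i+1) θ : ℝ) : ℂ)
          * (((Polynomial.Chebyshev.T ℝ ((i+1 : ℕ))).eval ((y : ℝ) / θ) : ℝ) : ℂ))
        = F ((i+1 : ℕ)) + F (-(((i:ℤ))+1)) := by
      intro i _
      have hcast : (-(((i:ℤ))+1)) = -(((i+1 : ℕ) : ℤ)) := by push_cast; ring
      rw [hcast, hpair (i+1), hT (i+1)]
    rw [Finset.sum_congr rfl this, Finset.sum_add_distrib]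
    ring
  rw [hA, ← hG]
  rw [show P - G θ φ = -(G θ φ - P) by ring, norm_neg]
  -- final numeric bound
  have hfinal : 2 * ((E * q ^ (m+1)) * (1 - q)⁻¹)
      ≤ 4 * (Real.exp (1 - θ ^ 2 / (2 * (m : ℝ) + 2) ^ 2) * θ / (2 * (m : ℝ) + 2)) ^ (m + 1) := by
    have hrhs : (Real.exp (1 - θ ^ 2 / (2 * (m : ℝ) + 2) ^ 2) * θ / (2 * (m : ℝ) + 2)) ^ (m + 1)
        = E * q ^ (m+1) := by
      rw [mul_div_assoc, mul_pow, ← hq_def]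
      congr 1
      rw [← Real.exp_nat_mul, hE_def]
      congr 1
      rw [hq_def]
      field_simp
      push_cast
      ring
    rw [hrhs]
    have hinv : (1 - q)⁻¹ ≤ 2 := by
      rw [inv_le_iff_one_le_mul₀ (by linarith)]
      linarith
    have hpos : 0 < E * q ^ (m+1) := by positivity
    nlinarith
  exact le_trans herrbound hfinal
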